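/- Fix r ≥ 1, set M = 2^{r+1} and let Σ = {∑_{i∈S} c_i : S ⊆ {1,…,r+1}} where (c_1,…,c_{r+1}) = (2^r, 2^{r-1}, …, 4, 3, 2). Suppose x = ∑_{n=1}^∞ a_n/M^n = ∑_{n=1}^∞ b_n/M^n where (a_n), (b_n) ∈ Σ^ℕ and (a_n) ≠ (b_n). Then, after possibly interchanging (a_n) and (b_n), there exists a finite or infinite strictly increasing sequence n_0 < n_1 < n_2 < … of positive integers such that: (1) a_k = b_k for all k < n_0; (2) a_{n_0} = 2+j and b_{n_0} = 3+j for some j ∈ {0,1,…,M−4}; (3) a_{n_k} = M+1 and b_{n_k} = 0 for all odd k; (4) a_{n_k} = 0 and b_{n_k} = M+1 for all even k > 0; (5) a_i ∈ {M−1, M+1} and a_i − b_i = M−1 whenever n_{2k} < i < n_{2k+1}; (6) a_i ∈ {0,2} and b_i − a_i = M−1 whenever n_{2k+1} < i < n_{2k+2}. Moreover x has exactly two such digital representations. -/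

import Mathlib

open Set Topology

noncomputable section


namespace GNJAux

/-- valid digit sequences -/
def DigSeq (M : ℕ) (u : ℕ → ℕ) : Prop := ∀ n, u n ≤ M + 1 ∧ u n ≠ 1 ∧ u n ≠ M

/-- tail difference sum -/
def TT (M : ℕ) (u v : ℕ → ℕ) (N : ℕ) : ℝ :=
  ∑' n : ℕ, ((u (N + n) : ℝ) - (v (N + n) : ℝ)) / (M : ℝ) ^ (n + 1)

variable {M : ℕ} {u v w : ℕ → ℕ}

lemma hM0 (hM : 4 ≤ M) : (0:ℝ) < M := by
  have : (4:ℝ) ≤ M := by exact_mod_cast hM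
  linarith

lemma hr01 (hM : 4 ≤ M) : (0:ℝ) ≤ 1/M ∧ 1/(M:ℝ) < 1 := by
  have h0 := hM0 hM
  have : (4:ℝ) ≤ M := by exact_mod_cast hM
  constructor
  · positivity
  · rw [div_lt_one h0]; linarith

lemma summable_single (hM : 4 ≤ M) (hu : ∀ n, u n ≤ M + 1) :
    Summable (fun n : ℕ => (u n : ℝ) / (M:ℝ)^(n+1)) := by
  obtain ⟨hr0, hr1⟩ := hr01 hM
  have h0 := hM0 hM
  have hg : Summable (fun n : ℕ => ((M:ℝ)+1) * (1/M)^(n+1)) := by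
    have h := (summable_geometric_of_lt_one hr0 hr1).mul_left (((M:ℝ)+1) * (1/M))
    refine h.congr (fun n => ?_)
    rw [pow_succ]; ring
  refine hg.of_nonneg_of_le (fun n => by positivity) (fun n => ?_)
  have h1 : (u n : ℝ) ≤ (M:ℝ)+1 := by
    have := hu n; push_cast; exact_mod_cast this
  have h2 : ((M:ℝ)+1) * (1/M)^(n+1) = ((M:ℝ)+1)/(M:ℝ)^(n+1) := by
    rw [one_div, inv_pow, div_eq_mul_inv]
  rw [h2]
  gcongr

lemma tsum_geom_val (hM : 4 ≤ M) :
    ∑' n:ℕ, ((M:ℝ)+1)/(M:ℝ)^(n+1) = ((M:ℝ)+1)/((M:ℝ)-1) := by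
  obtain ⟨hr0, hr1⟩ := hr01 hM
  have h0 := hM0 hM
  have hM4 : (4:ℝ) ≤ M := by exact_mod_cast hM
  have hMne : (M:ℝ) ≠ 0 := by linarith
  have h1 : ∀ n:ℕ, ((M:ℝ)+1)/(M:ℝ)^(n+1) = (((M:ℝ)+1) * (1/M)) * (1/M)^n := by
    intro n
    rw [pow_succ, div_eq_iff (by positivity)]
    field_simp
    ring_nf
    rw [← mul_pow, mul_inv_cancel₀ hMne, one_pow]
  rw [tsum_congr h1, tsum_mul_left, tsum_geometric_of_lt_one hr0 hr1]
  rw [show (1:ℝ) - 1/M = ((M:ℝ)-1)/M by field_simp]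
  rw [inv_div]
  have hM1 : (M:ℝ) - 1 ≠ 0 := by linarith
  field_simp

lemma tt_summable (hM : 4 ≤ M) (hu : DigSeq M u) (hv : DigSeq M v) (N : ℕ) :
    Summable (fun n : ℕ => ((u (N + n) : ℝ) - (v (N + n) : ℝ)) / (M : ℝ) ^ (n + 1)) := by
  have hsu := summable_single (u := fun n => u (N + n)) hM (fun n => (hu (N+n)).1)
  have hsv := summable_single (u := fun n => v (N + n)) hM (fun n => (hv (N+n)).1)
  exact (hsu.sub hsv).congr (fun n => (sub_div _ _ _).symm)

lemma tt_abs_lt_two (hM : 4 ≤ M) (hu : DigSeq M u) (hv : DigSeq M v) (N : ℕ) :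
    |TT M u v N| < 2 := by
  have hs := tt_summable hM hu hv N
  have hM4 : (4:ℝ) ≤ M := by exact_mod_cast hM
  have hg : Summable (fun n : ℕ => ((M:ℝ)+1)/(M:ℝ)^(n+1)) := by
    have h := summable_single (M := M) (u := fun _ => M + 1) hM (fun _ => le_rfl)
    refine h.congr fun n => by push_cast; ring
  have hb : ∀ n : ℕ, |(u (N+n):ℝ) - (v (N+n):ℝ)|/(M:ℝ)^(n+1) ≤ ((M:ℝ)+1)/(M:ℝ)^(n+1) := by
    intro n
    have h1 : (u (N+n):ℝ) ≤ (M:ℝ)+1 := by exact_mod_cast (hu (N+n)).1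
    have h2 : (v (N+n):ℝ) ≤ (M:ℝ)+1 := by exact_mod_cast (hv (N+n)).1
    have h3 : (0:ℝ) ≤ (u (N+n):ℝ) := by positivity
    have h4 : (0:ℝ) ≤ (v (N+n):ℝ) := by positivity
    gcongr
    rw [abs_le]
    constructor <;> linarith
  have hsF : Summable (fun n : ℕ => |(u (N+n):ℝ) - (v (N+n):ℝ)|/(M:ℝ)^(n+1)) := by
    refine hs.abs.congr (fun n => ?_)
    rw [abs_div, abs_of_pos (pow_pos (hM0 hM) _)]
  have h1 : |TT M u v N| ≤ ∑' n : ℕ, |(u (N+n):ℝ) - (v (N+n):ℝ)|/(M:ℝ)^(n+1) := by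
    rw [TT]
    simpa [Real.norm_eq_abs] using norm_tsum_le_tsum_norm hs.norm
  have h2 : ∑' n : ℕ, |(u (N+n):ℝ) - (v (N+n):ℝ)|/(M:ℝ)^(n+1)
      ≤ ∑' n : ℕ, ((M:ℝ)+1)/(M:ℝ)^(n+1) := Summable.tsum_le_tsum hb hsF hg
  rw [tsum_geom_val hM] at h2
  have h3 : ((M:ℝ)+1)/((M:ℝ)-1) < 2 := by
    rw [div_lt_iff₀ (by linarith)]
    linarith
  linarith

lemma tt_rec (hM : 4 ≤ M) (hu : DigSeq M u) (hv : DigSeq M v) (N : ℕ) :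
    (M:ℝ) * TT M u v N = ((u N:ℝ) - (v N:ℝ)) + TT M u v (N+1) := by
  have hs := tt_summable hM hu hv N
  have hMne : (M:ℝ) ≠ 0 := ne_of_gt (hM0 hM)
  rw [TT, Summable.tsum_eq_zero_add hs]
  have h2 : ∀ n:ℕ, ((u (N+(n+1)):ℝ) - (v (N+(n+1)):ℝ))/(M:ℝ)^(n+1+1)
      = (1/M) * (((u ((N+1)+n):ℝ) - (v ((N+1)+n):ℝ))/(M:ℝ)^(n+1)) := by
    intro n
    rw [show N+(n+1) = (N+1)+n by omega, pow_succ, div_mul_eq_div_div]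
    ring
  rw [tsum_congr h2, tsum_mul_left, TT]
  simp only [Nat.add_zero, zero_add, pow_one]
  field_simp

lemma tt_swap (hM : 4 ≤ M) (hu : DigSeq M u) (hv : DigSeq M v) (N : ℕ) :
    TT M u v N = - TT M v u N := by
  rw [TT, TT, ← tsum_neg]
  exact tsum_congr (fun n => by ring)

lemma tt_zero (hM : 4 ≤ M) (hu : DigSeq M u) (hv : DigSeq M v)
    (hx : ∑' n : ℕ, (u n:ℝ)/(M:ℝ)^(n+1) = ∑' n : ℕ, (v n:ℝ)/(M:ℝ)^(n+1)) :
    TT M u v 0 = 0 := by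
  have hsu := summable_single hM (fun n => (hu n).1)
  have hsv := summable_single hM (fun n => (hv n).1)
  have : TT M u v 0 = ∑' n : ℕ, ((u n:ℝ)/(M:ℝ)^(n+1) - (v n:ℝ)/(M:ℝ)^(n+1)) := by
    rw [TT]
    exact tsum_congr (fun n => by rw [zero_add, sub_div])
  rw [this, Summable.tsum_sub hsu hsv, hx, sub_self]

/-- step lemma in state +1 -/
lemma step_pos (hM : 4 ≤ M) (hu : DigSeq M u) (hv : DigSeq M v) {N : ℕ}
    (ht : TT M u v N = 1) :
    (u N = M + 1 ∧ v N = 0 ∧ TT M u v (N+1) = -1) ∨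
    ((u N = M - 1 ∨ u N = M + 1) ∧ u N = v N + (M - 1) ∧ TT M u v (N+1) = 1) := by
  have hrec := tt_rec hM hu hv N
  rw [ht, mul_one] at hrec
  have habs := tt_abs_lt_two hM hu hv (N+1)
  obtain ⟨hu1, hu2, hu3⟩ := hu N
  obtain ⟨hv1, hv2, hv3⟩ := hv N
  have h3 := abs_lt.mp habs
  have hA : (u N:ℝ) < (v N:ℝ) + M + 2 := by linarith
  have hB : (v N:ℝ) + M < (u N:ℝ) + 2 := by linarith
  have hA' : u N < v N + M + 2 := by exact_mod_cast hA
  have hB' : v N + M < u N + 2 := by exact_mod_cast hB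
  rcases (show u N = v N + (M-1) ∨ u N = v N + M ∨ u N = v N + (M+1) by omega)
    with h | h | h
  · right
    refine ⟨by omega, h, ?_⟩
    have hcast : ((u N:ℕ):ℝ) = (v N:ℝ) + (M:ℝ) - 1 := by
      rw [h]
      push_cast [Nat.cast_sub (by omega : 1 ≤ M)]
      ring
    rw [hcast] at hrec
    linarith
  · exfalso; omega
  · left
    have h1 : u N = M + 1 := by omega
    have h2 : v N = 0 := by omega
    refine ⟨h1, h2, ?_⟩
    rw [h1, h2] at hrec
    push_cast at hrec
    linarith

lemma step_neg (hM : 4 ≤ M) (hu : DigSeq M u) (hv : DigSeq M v) {N : ℕ}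
    (ht : TT M u v N = -1) :
    (u N = 0 ∧ v N = M + 1 ∧ TT M u v (N+1) = 1) ∨
    ((v N = M - 1 ∨ v N = M + 1) ∧ v N = u N + (M - 1) ∧ TT M u v (N+1) = -1) := by
  have hswap := tt_swap hM hu hv N
  have ht' : TT M v u N = 1 := by rw [ht] at hswap; linarith
  have hswap1 := tt_swap hM hu hv (N+1)
  rcases step_pos hM hv hu ht' with ⟨h1, h2, h3⟩ | ⟨h1, h2, h3⟩
  · exact Or.inl ⟨h2, h1, by rw [h3] at hswap1; linarith⟩
  · exact Or.inr ⟨h1, h2, by rw [h3] at hswap1; linarith⟩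

/-- step lemma in state 0 with distinct digits -/
lemma step_zero (hM : 4 ≤ M) (hu : DigSeq M u) (hv : DigSeq M v) {N : ℕ}
    (ht : TT M u v N = 0) (hne : u N ≠ v N) :
    (v N = u N + 1 ∧ 2 ≤ u N ∧ u N ≤ M - 2 ∧ TT M u v (N+1) = 1) ∨
    (u N = v N + 1 ∧ 2 ≤ v N ∧ v N ≤ M - 2 ∧ TT M u v (N+1) = -1) := by
  have hrec := tt_rec hM hu hv N
  rw [ht, mul_zero] at hrec
  have habs := tt_abs_lt_two hM hu hv (N+1)
  obtain ⟨hu1, hu2, hu3⟩ := hu N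
  obtain ⟨hv1, hv2, hv3⟩ := hv N
  have h3 := abs_lt.mp habs
  have hA : (u N:ℝ) < (v N:ℝ) + 2 := by linarith
  have hB : (v N:ℝ) < (u N:ℝ) + 2 := by linarith
  have hA' : u N < v N + 2 := by exact_mod_cast hA
  have hB' : v N < u N + 2 := by exact_mod_cast hB
  rcases (show v N = u N + 1 ∨ u N = v N + 1 by omega) with h | h
  · left
    refine ⟨h, by omega, by omega, ?_⟩
    have hcast : ((v N:ℕ):ℝ) = (u N:ℝ) + 1 := by rw [h]; push_cast; ring
    rw [hcast] at hrec
    linarith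
  · right
    refine ⟨h, by omega, by omega, ?_⟩
    have hcast : ((u N:ℕ):ℝ) = (v N:ℝ) + 1 := by rw [h]; push_cast; ring
    rw [hcast] at hrec
    linarith

lemma step_zero_eq (hM : 4 ≤ M) (hu : DigSeq M u) (hv : DigSeq M v) {N : ℕ}
    (ht : TT M u v N = 0) (he : u N = v N) : TT M u v (N+1) = 0 := by
  have := tt_rec hM hu hv N
  rw [ht, he] at this
  linarith

lemma E_pos (hM : 4 ≤ M) (hu : DigSeq M u) (hv : DigSeq M v) {N : ℕ}
    (ht : TT M u v N = 1) : u N = M - 1 ∨ u N = M + 1 := by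
  rcases step_pos hM hu hv ht with ⟨h, _, _⟩ | ⟨h, _, _⟩
  · exact Or.inr h
  · exact h

lemma E_neg (hM : 4 ≤ M) (hu : DigSeq M u) (hv : DigSeq M v) {N : ℕ}
    (ht : TT M u v N = -1) : u N = 0 ∨ u N = 2 := by
  rcases step_neg hM hu hv ht with ⟨h, _, _⟩ | ⟨h1, h2, _⟩
  · exact Or.inl h
  · have hM4 := hM
    rcases h1 with h1 | h1 <;> omega

lemma pm_persist (hM : 4 ≤ M) (hu : DigSeq M u) (hv : DigSeq M v) {N : ℕ}
    (ht : TT M u v N = 1 ∨ TT M u v N = -1) :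
    ∀ k, TT M u v (N + k) = 1 ∨ TT M u v (N + k) = -1 := by
  intro k
  induction k with
  | zero => exact ht
  | succ k ih =>
    rw [show N + (k+1) = (N+k) + 1 by omega]
    rcases ih with h | h
    · rcases step_pos hM hu hv h with ⟨_, _, h'⟩ | ⟨_, _, h'⟩
      · exact Or.inr h'
      · exact Or.inl h'
    · rcases step_neg hM hu hv h with ⟨_, _, h'⟩ | ⟨_, _, h'⟩
      · exact Or.inl h'
      · exact Or.inr h'

lemma tt_cases (hM : 4 ≤ M) (hu : DigSeq M u) (hv : DigSeq M v)
    (h0 : TT M u v 0 = 0) :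
    ∀ n, TT M u v n = 0 ∨ TT M u v n = 1 ∨ TT M u v n = -1 := by
  intro n
  induction n with
  | zero => exact Or.inl h0
  | succ n ih =>
    rcases ih with h | h | h
    · by_cases he : u n = v n
      · exact Or.inl (step_zero_eq hM hu hv h he)
      · rcases step_zero hM hu hv h he with ⟨_, _, _, h'⟩ | ⟨_, _, _, h'⟩
        · exact Or.inr (Or.inl h')
        · exact Or.inr (Or.inr h')
    · rcases step_pos hM hu hv h with ⟨_, _, h'⟩ | ⟨_, _, h'⟩
      · exact Or.inr (Or.inr h')
      · exact Or.inr (Or.inl h')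
    · rcases step_neg hM hu hv h with ⟨_, _, h'⟩ | ⟨_, _, h'⟩
      · exact Or.inr (Or.inl h')
      · exact Or.inr (Or.inr h')

lemma zero_past (hM : 4 ≤ M) (hu : DigSeq M u) (hv : DigSeq M v)
    (h0 : TT M u v 0 = 0) {N : ℕ} (hN : TT M u v N = 0) :
    ∀ n ≤ N, TT M u v n = 0 := by
  intro n hn
  by_contra h
  rcases tt_cases hM hu hv h0 n with h' | h' | h'
  · exact h h'
  all_goals {
    have := pm_persist hM hu hv (by tauto) (N - n)
    rw [show n + (N - n) = N by omega, hN] at this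
    rcases this with h'' | h'' <;> norm_num at h'' }

lemma eq_below (hM : 4 ≤ M) (hu : DigSeq M u) (hv : DigSeq M v)
    (h0 : TT M u v 0 = 0) {N : ℕ} (hN : TT M u v N = 0) :
    ∀ n < N, u n = v n := by
  intro n hn
  have h1 : TT M u v n = 0 := zero_past hM hu hv h0 hN n (by omega)
  have h2 : TT M u v (n+1) = 0 := zero_past hM hu hv h0 hN (n+1) (by omega)
  have h3 := tt_rec hM hu hv n
  rw [h1, h2] at h3
  have : (u n : ℝ) = v n := by linarith
  exact_mod_cast this

lemma tail_clash (hM : 4 ≤ M) (hu : DigSeq M u) (hv : DigSeq M v) (hw : DigSeq M w)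
    {N : ℕ} (hw0 : TT M u w N = 0) (hvpm : TT M u v N = 1 ∨ TT M u v N = -1)
    (h0w : TT M u w 0 = 0) (hne : u ≠ w) : False := by
  classical
  have hex : ∃ k, u (N + k) ≠ w (N + k) := by
    by_contra h
    push_neg at h
    apply hne
    funext n
    rcases lt_or_ge n N with hn | hn
    · exact eq_below hM hu hw h0w hw0 n hn
    · have := h (n - N); rwa [show N + (n - N) = n by omega] at this
  set k0 := Nat.find hex with hk0
  set ν := N + k0 with hν
  have hνne : u ν ≠ w ν := Nat.find_spec hex
  have hνmin : ∀ m, N ≤ m → m < ν → u m = w m := by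
    intro m hm1 hm2
    have h1 := Nat.find_min hex (m := m - N) (by omega)
    simpa [show N + (m - N) = m by omega] using not_ne_iff.mp h1
  have hw0ν : TT M u w ν = 0 := by
    have hall : ∀ k, k ≤ k0 → TT M u w (N + k) = 0 := by
      intro k hk
      induction k with
      | zero => simpa using hw0
      | succ k ih =>
        have h1 := ih (by omega)
        have h2 : u (N+k) = w (N+k) := hνmin (N+k) (by omega) (by omega)
        have h3 := step_zero_eq hM hu hw h1 h2
        rwa [show N + k + 1 = N + (k+1) by omega] at h3
    exact hall k0 le_rfl
  have hvν : TT M u v ν = 1 ∨ TT M u v ν = -1 := pm_persist hM hu hv hvpm k0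
  obtain ⟨hu1, hu2, hu3⟩ := hu ν
  obtain ⟨hw1, hw2, hw3⟩ := hw ν
  rcases hvν with hvν | hvν
  · have hEν := E_pos hM hu hv hvν
    rcases step_zero hM hu hw hw0ν hνne with ⟨hb1, hb2, hb3, hbT⟩ | ⟨hb1, hb2, hb3, hbT⟩
    · omega
    · have hstay : TT M u v (ν+1) = 1 := by
        rcases step_pos hM hu hv hvν with ⟨hf1, _, _⟩ | ⟨_, _, h⟩
        · omega
        · exact h
      have h5 := E_pos hM hu hv hstay
      have h6 := E_neg hM hu hw hbT
      omega
  · have hEν := E_neg hM hu hv hvν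
    rcases step_zero hM hu hw hw0ν hνne with ⟨hb1, hb2, hb3, hbT⟩ | ⟨hb1, hb2, hb3, hbT⟩
    · have hstay : TT M u v (ν+1) = -1 := by
        rcases step_neg hM hu hv hvν with ⟨hf1, _, _⟩ | ⟨_, _, h⟩
        · omega
        · exact h
      have h5 := E_neg hM hu hv hstay
      have h6 := E_pos hM hu hw hbT
      omega
    · omega

lemma partner_unique (hM : 4 ≤ M) (hu : DigSeq M u) (hv : DigSeq M v) (hw : DigSeq M w)
    (h0v : TT M u v 0 = 0) (h0w : TT M u w 0 = 0)
    (hnev : u ≠ v) (hnew : u ≠ w) : v = w := by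
  classical
  have key : ∀ n, TT M u v n = TT M u w n →
      v n = w n ∧ TT M u v (n+1) = TT M u w (n+1) := by
    intro n hT
    rcases tt_cases hM hu hv h0v n with h | h | h
    · have hTw : TT M u w n = 0 := by rw [hT] at h; exact h
      by_cases he1 : u n = v n <;> by_cases he2 : u n = w n
      · exact ⟨by omega, by rw [step_zero_eq hM hu hv h he1,
          step_zero_eq hM hu hw hTw he2]⟩
      · exfalso
        have hwpm : TT M u w (n+1) = 1 ∨ TT M u w (n+1) = -1 := by
          rcases step_zero hM hu hw hTw he2 with ⟨_,_,_,hT'⟩|⟨_,_,_,hT'⟩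
          · exact Or.inl hT'
          · exact Or.inr hT'
        exact tail_clash hM hu hw hv (step_zero_eq hM hu hv h he1) hwpm h0v hnev
      · exfalso
        have hvpm : TT M u v (n+1) = 1 ∨ TT M u v (n+1) = -1 := by
          rcases step_zero hM hu hv h he1 with ⟨_,_,_,hT'⟩|⟨_,_,_,hT'⟩
          · exact Or.inl hT'
          · exact Or.inr hT'
        exact tail_clash hM hu hv hw (step_zero_eq hM hu hw hTw he2) hvpm h0w hnew
      · rcases step_zero hM hu hv h he1 with ⟨a1,a2,a3,aT⟩|⟨a1,a2,a3,aT⟩ <;>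
          rcases step_zero hM hu hw hTw he2 with ⟨b1,b2,b3,bT⟩|⟨b1,b2,b3,bT⟩
        · exact ⟨by omega, by rw [aT, bT]⟩
        · exfalso
          have h5 := E_pos hM hu hv aT
          have h6 := E_neg hM hu hw bT
          omega
        · exfalso
          have h5 := E_neg hM hu hv aT
          have h6 := E_pos hM hu hw bT
          omega
        · exact ⟨by omega, by rw [aT, bT]⟩
    · have hTw : TT M u w n = 1 := by rw [hT] at h; exact h
      rcases step_pos hM hu hv h with ⟨a1,a2,aT⟩|⟨a1,a2,aT⟩ <;>
        rcases step_pos hM hu hw hTw with ⟨b1,b2,bT⟩|⟨b1,b2,bT⟩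
      · exact ⟨by omega, by rw [aT, bT]⟩
      · exfalso
        have h5 := E_neg hM hu hv aT
        have h6 := E_pos hM hu hw bT
        omega
      · exfalso
        have h5 := E_pos hM hu hv aT
        have h6 := E_neg hM hu hw bT
        omega
      · exact ⟨by omega, by rw [aT, bT]⟩
    · have hTw : TT M u w n = -1 := by rw [hT] at h; exact h
      rcases step_neg hM hu hv h with ⟨a1,a2,aT⟩|⟨a1,a2,aT⟩ <;>
        rcases step_neg hM hu hw hTw with ⟨b1,b2,bT⟩|⟨b1,b2,bT⟩
      · exact ⟨by omega, by rw [aT, bT]⟩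
      · exfalso
        have h5 := E_pos hM hu hv aT
        have h6 := E_neg hM hu hw bT
        omega
      · exfalso
        have h5 := E_neg hM hu hv aT
        have h6 := E_pos hM hu hw bT
        omega
      · have := hu n
        exact ⟨by omega, by rw [aT, bT]⟩
  have hTeq : ∀ n, TT M u v n = TT M u w n := by
    intro n
    induction n with
    | zero => rw [h0v, h0w]
    | succ n ih => exact (key n ih).2
  funext n
  exact (key n (hTeq n)).1

lemma geom_aux : ∀ s : ℕ, ∑ i ∈ Finset.range s, 2^(s+1-i) = 2^(s+2) - 4 := by
  intro s
  induction s with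
  | zero => simp
  | succ s ih =>
    rw [Finset.sum_range_succ]
    have h1 : ∀ i ∈ Finset.range s, 2^(s+1+1-i) = 2*2^(s+1-i) := by
      intro i hi
      rw [Finset.mem_range] at hi
      rw [show s+1+1-i = (s+1-i)+1 by omega, pow_succ]
      ring
    rw [Finset.sum_congr rfl h1, ← Finset.mul_sum, ih]
    rw [show s+1+1-s = 2 by omega]
    have h2 : 4 ≤ 2^(s+2) := by
      have h := Nat.pow_le_pow_right (show 1 ≤ 2 by norm_num) (show 2 ≤ s+2 by omega)
      simpa using h
    have h3 : (2:ℕ)^(s+1+2) = 2*2^(s+2) := by ring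
    have h4 : (2:ℕ)^2 = 4 := by norm_num
    omega

lemma sig_digits (r M : ℕ) (hr : 1 ≤ r) (hM : M = 2 ^ (r + 1))
    (c : Fin (r + 1) → ℕ)
    (hc : ∀ i : Fin (r + 1),
      c i = if (i : ℕ) = r then 2 else if (i : ℕ) = r - 1 then 3 else 2 ^ (r - (i : ℕ)))
    (s : ℕ) (hs : ∃ S : Finset (Fin (r + 1)), s = ∑ i ∈ S, c i) :
    s ≤ M + 1 ∧ s ≠ 1 ∧ s ≠ M := by
  obtain ⟨S, rfl⟩ := hs
  have hc2 : ∀ i, 2 ≤ c i := by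
    intro i
    rw [hc i]
    split_ifs with h1 h2
    · omega
    · omega
    · have hi : (i:ℕ) < r := by have := i.isLt; omega
      calc 2 = 2^1 := rfl
        _ ≤ 2^(r - (i:ℕ)) := Nat.pow_le_pow_right (by norm_num) (by omega)
  have hsum : ∑ i : Fin (r+1), c i = M + 1 := by
    obtain ⟨t, rfl⟩ : ∃ t, r = t + 1 := ⟨r - 1, by omega⟩
    have h1 : ∑ i : Fin (t+1+1), c i = ∑ i ∈ Finset.range (t+1+1),
        (if i = t+1 then 2 else if i = t then 3 else 2^(t+1-i)) := by
      rw [← Fin.sum_univ_eq_sum_range]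
      refine Finset.sum_congr rfl (fun i _ => ?_)
      rw [hc i]
      norm_num
    rw [h1, Finset.sum_range_succ, Finset.sum_range_succ]
    have h2 : ∀ i ∈ Finset.range t,
        (if i = t+1 then 2 else if i = t then 3 else 2^(t+1-i)) = 2^(t+1-i) := by
      intro i hi
      rw [Finset.mem_range] at hi
      rw [if_neg (by omega), if_neg (by omega)]
    rw [Finset.sum_congr rfl h2, geom_aux t]
    rw [if_neg (by omega), if_pos rfl, if_pos rfl]
    have h4 : 4 ≤ 2^(t+2) := by
      have h := Nat.pow_le_pow_right (show 1 ≤ 2 by norm_num) (show 2 ≤ t+2 by omega)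
      simpa using h
    have h5 : M = 2^(t+2) := hM
    omega
  refine ⟨?_, ?_, ?_⟩
  · calc ∑ i ∈ S, c i ≤ ∑ i ∈ Finset.univ, c i :=
        Finset.sum_le_sum_of_subset (Finset.subset_univ S)
      _ = M + 1 := hsum
  · intro h1
    rcases Finset.eq_empty_or_nonempty S with rfl | ⟨i, hi⟩
    · simp at h1
    · have h2 := Finset.single_le_sum (fun j _ => Nat.zero_le (c j)) hi
      have h3 := hc2 i
      omega
  · intro h1
    have hM4 : 4 ≤ M := by
      rw [hM]
      have h := Nat.pow_le_pow_right (show 1 ≤ 2 by norm_num) (show 2 ≤ r+1 by omega)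
      simpa using h
    have hcompl : ∑ i ∈ S, c i + ∑ i ∈ Sᶜ, c i = M + 1 := by
      rw [Finset.sum_add_sum_compl]
      exact hsum
    have h2 : ∑ i ∈ Sᶜ, c i = 1 := by omega
    rcases Finset.eq_empty_or_nonempty Sᶜ with he | ⟨i, hi⟩
    · rw [he] at h2
      simp at h2
    · have h3 := Finset.single_le_sum (fun j _ => Nat.zero_le (c j)) hi
      have h4 := hc2 i
      omega

end GNJAux


theorem gnj_two_representations (r : ℕ) (hr : 1 ≤ r) (M : ℕ) (hM : M = 2 ^ (r + 1))
    (c : Fin (r + 1) → ℕ)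
    (hc : ∀ i : Fin (r + 1),
      c i = if (i : ℕ) = r then 2 else if (i : ℕ) = r - 1 then 3 else 2 ^ (r - (i : ℕ)))
    (Sig : Set ℕ) (hSig : Sig = {s : ℕ | ∃ S : Finset (Fin (r + 1)), s = ∑ i ∈ S, c i})
    (a b : ℕ → ℕ) (ha : ∀ n, a n ∈ Sig) (hb : ∀ n, b n ∈ Sig) (hab : a ≠ b)
    (x : ℝ) (hax : x = ∑' n : ℕ, (a n : ℝ) / (M : ℝ) ^ (n + 1))
    (hbx : x = ∑' n : ℕ, (b n : ℝ) / (M : ℝ) ^ (n + 1)) :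
    (∃ a' b' : ℕ → ℕ, ((a' = a ∧ b' = b) ∨ (a' = b ∧ b' = a)) ∧
      ∃ (L : ℕ∞) (m : ℕ → ℕ), 0 < L ∧
        -- the indices n₀ < n₁ < n₂ < … (those `m k` with `k < L`) are strictly increasing
        (∀ k : ℕ, ((k + 1 : ℕ) : ℕ∞) < L → m k < m (k + 1)) ∧
        -- (1) aₖ = bₖ for k < n₀
        (∀ i : ℕ, i < m 0 → a' i = b' i) ∧
        -- (2) a_{n₀} = 2 + j and b_{n₀} = 3 + j for some j ∈ {0, 1, …, M - 4}
        (∃ j : ℕ, j ≤ M - 4 ∧ a' (m 0) = 2 + j ∧ b' (m 0) = 3 + j) ∧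
        -- (3) a_{nₖ} = M + 1 and b_{nₖ} = 0 for odd k
        (∀ k : ℕ, Odd k → (k : ℕ∞) < L → a' (m k) = M + 1 ∧ b' (m k) = 0) ∧
        -- (4) a_{nₖ} = 0 and b_{nₖ} = M + 1 for even k > 0
        (∀ k : ℕ, Even k → 0 < k → (k : ℕ∞) < L → a' (m k) = 0 ∧ b' (m k) = M + 1) ∧
        -- (5) aᵢ ∈ {M - 1, M + 1} and aᵢ - bᵢ = M - 1 whenever n_{2k} < i < n_{2k+1}
        (∀ k i : ℕ, ((2 * k : ℕ) : ℕ∞) < L → m (2 * k) < i →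
          (((2 * k + 1 : ℕ) : ℕ∞) < L → i < m (2 * k + 1)) →
          a' i ∈ ({M - 1, M + 1} : Set ℕ) ∧ a' i = b' i + (M - 1)) ∧
        -- (6) aᵢ ∈ {0, 2} and bᵢ - aᵢ = M - 1 whenever n_{2k+1} < i < n_{2k+2}
        (∀ k i : ℕ, ((2 * k + 1 : ℕ) : ℕ∞) < L → m (2 * k + 1) < i →
          (((2 * k + 2 : ℕ) : ℕ∞) < L → i < m (2 * k + 2)) →
          a' i ∈ ({0, 2} : Set ℕ) ∧ b' i = a' i + (M - 1))) ∧
    -- moreover, x has exactly two digital representations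
    (∀ d : ℕ → ℕ, (∀ n, d n ∈ Sig) → x = ∑' n : ℕ, (d n : ℝ) / (M : ℝ) ^ (n + 1) →
      d = a ∨ d = b) := by
  classical
  have hM4 : 4 ≤ M := by
    rw [hM]
    have h := Nat.pow_le_pow_right (show 1 ≤ 2 by norm_num) (show 2 ≤ r + 1 by omega)
    simpa using h
  have hdig : ∀ s ∈ Sig, s ≤ M + 1 ∧ s ≠ 1 ∧ s ≠ M := by
    intro s hs
    rw [hSig] at hs
    exact GNJAux.sig_digits r M hr hM c hc s hs
  have hda : GNJAux.DigSeq M a := fun n => hdig _ (ha n)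
  have hdb : GNJAux.DigSeq M b := fun n => hdig _ (hb n)
  have hx0 : GNJAux.TT M a b 0 = 0 := GNJAux.tt_zero hM4 hda hdb (by rw [← hax, ← hbx])
  constructor
  · -- structure of the two representations
    have hexab : ∃ n, a n ≠ b n := Function.ne_iff.mp hab
    set n₀ := Nat.find hexab with hn₀
    have hne0 : a n₀ ≠ b n₀ := Nat.find_spec hexab
    have hmin : ∀ i < n₀, a i = b i := fun i hi => not_ne_iff.mp (Nat.find_min hexab hi)
    have hT0 : ∀ n ≤ n₀, GNJAux.TT M a b n = 0 := by
      intro n hn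
      induction n with
      | zero => exact hx0
      | succ n ih =>
        exact GNJAux.step_zero_eq hM4 hda hdb (ih (by omega)) (hmin n (by omega))
    obtain ⟨u, v, huv, hdu, hdv, hmin', hT0', hv_eq, hu2, huM2, hT1⟩ :
        ∃ u v : ℕ → ℕ, ((u = a ∧ v = b) ∨ (u = b ∧ v = a)) ∧
          GNJAux.DigSeq M u ∧ GNJAux.DigSeq M v ∧
          (∀ i < n₀, u i = v i) ∧ GNJAux.TT M u v n₀ = 0 ∧
          v n₀ = u n₀ + 1 ∧ 2 ≤ u n₀ ∧ u n₀ ≤ M - 2 ∧ GNJAux.TT M u v (n₀+1) = 1 := by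
      rcases GNJAux.step_zero hM4 hda hdb (hT0 n₀ le_rfl) hne0 with
        ⟨h1, h2, h3, h4⟩ | ⟨h1, h2, h3, h4⟩
      · exact ⟨a, b, Or.inl ⟨rfl, rfl⟩, hda, hdb, hmin, hT0 n₀ le_rfl, h1, h2, h3, h4⟩
      · refine ⟨b, a, Or.inr ⟨rfl, rfl⟩, hdb, hda, fun i hi => (hmin i hi).symm, ?_,
          h1, h2, h3, ?_⟩
        · have hsw := GNJAux.tt_swap hM4 hda hdb n₀
          rw [hT0 n₀ le_rfl] at hsw
          linarith
        · have hsw := GNJAux.tt_swap hM4 hda hdb (n₀+1)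
          rw [h4] at hsw
          linarith
    set p : ℕ → Prop := fun n => n = n₀ ∨ (n₀ < n ∧ u n + v n = M + 1) with hpdef
    set L : ℕ∞ := (setOf p).encard with hLdef
    set m : ℕ → ℕ := Nat.nth p with hmdef
    have hp0 : p n₀ := Or.inl rfl
    have hLpos : (0:ℕ∞) < L := Set.encard_pos.mpr ⟨n₀, hp0⟩
    have hbridge : ∀ k : ℕ,
        ((k:ℕ∞) < L ↔ ∀ hf : (setOf p).Finite, k < hf.toFinset.card) := by
      intro k
      rcases (setOf p).finite_or_infinite with hf | hi
      · rw [hLdef, hf.encard_eq_coe_toFinset_card, Nat.cast_lt]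
        exact ⟨fun h hf' => by rwa [Subsingleton.elim hf' hf], fun h => h hf⟩
      · rw [hLdef, hi.encard_eq]
        constructor
        · intro _ hf
          exact absurd hf hi
        · intro _
          simp
    have hcard_of : ∀ k : ℕ, (k:ℕ∞) < L → ∀ hf : (setOf p).Finite, k < hf.toFinset.card :=
      fun k h => (hbridge k).mp h
    have hm0 : m 0 = n₀ := by
      rw [hmdef, Nat.nth_zero]
      refine le_antisymm (Nat.sInf_le hp0) (le_csInf ⟨n₀, hp0⟩ ?_)
      intro k hk
      rcases hk with rfl | ⟨hk, _⟩
      · exact le_rfl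
      · exact hk.le
    have hmono : ∀ j k : ℕ, j < k → (k:ℕ∞) < L → m j < m k :=
      fun j k hjk h => Nat.nth_lt_nth' hjk (hcard_of k h)
    have hcount0 : Nat.count p n₀ = 0 := by
      rw [Nat.count_iff_forall_not]
      intro i hi hpi
      rcases hpi with h | ⟨h, _⟩ <;> omega
    have hcount1 : Nat.count p (n₀+1) = 1 := by
      rw [Nat.count_succ, hcount0, if_pos hp0]
    have hstate : ∀ k : ℕ,
        (Odd (Nat.count p (n₀+1+k)) → GNJAux.TT M u v (n₀+1+k) = 1) ∧
        (Even (Nat.count p (n₀+1+k)) → GNJAux.TT M u v (n₀+1+k) = -1) := by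
      intro k
      induction k with
      | zero =>
        simp only [Nat.add_zero]
        constructor
        · intro _
          exact hT1
        · intro h
          rw [hcount1] at h
          exact absurd h (by norm_num)
      | succ k ih =>
        have hnn : n₀ < n₀+1+k := by omega
        have hcs := Nat.count_succ p (n₀+1+k)
        rw [show n₀+1+(k+1) = (n₀+1+k)+1 by omega]
        rcases Nat.even_or_odd (Nat.count p (n₀+1+k)) with hpar | hpar
        · have hTn : GNJAux.TT M u v (n₀+1+k) = -1 := ih.2 hpar
          rcases GNJAux.step_neg hM4 hdu hdv hTn with ⟨h1, h2, hT'⟩ | ⟨h1, h2, hT'⟩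
          · have hpn : p (n₀+1+k) := Or.inr ⟨hnn, by omega⟩
            have hcc : Nat.count p ((n₀+1+k)+1) = Nat.count p (n₀+1+k) + 1 := by
              rw [hcs, if_pos hpn]
            constructor
            · intro _
              exact hT'
            · intro h
              exfalso
              rw [hcc] at h
              simp [Nat.even_iff, Nat.odd_iff] at hpar h
              omega
          · have hpn : ¬ p (n₀+1+k) := by
              intro hpn'
              rcases hpn' with h' | ⟨_, hsum⟩
              · omega
              · have := (hdu (n₀+1+k)).2.1
                omega
            have hcc : Nat.count p ((n₀+1+k)+1) = Nat.count p (n₀+1+k) := by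
              rw [hcs, if_neg hpn]
              omega
            rw [hcc]
            constructor
            · intro h
              exfalso
              simp [Nat.even_iff, Nat.odd_iff] at hpar h
              omega
            · intro _
              exact hT'
        · have hTn : GNJAux.TT M u v (n₀+1+k) = 1 := ih.1 hpar
          rcases GNJAux.step_pos hM4 hdu hdv hTn with ⟨h1, h2, hT'⟩ | ⟨h1, h2, hT'⟩
          · have hpn : p (n₀+1+k) := Or.inr ⟨hnn, by omega⟩
            have hcc : Nat.count p ((n₀+1+k)+1) = Nat.count p (n₀+1+k) + 1 := by
              rw [hcs, if_pos hpn]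
            constructor
            · intro h
              exfalso
              rw [hcc] at h
              simp [Nat.even_iff, Nat.odd_iff] at hpar h
              omega
            · intro _
              exact hT'
          · have hpn : ¬ p (n₀+1+k) := by
              intro hpn'
              rcases hpn' with h' | ⟨_, hsum⟩
              · omega
              · have := (hdv (n₀+1+k)).2.1
                omega
            have hcc : Nat.count p ((n₀+1+k)+1) = Nat.count p (n₀+1+k) := by
              rw [hcs, if_neg hpn]
              omega
            rw [hcc]
            constructor
            · intro _
              exact hT'
            · intro h
              exfalso
              simp [Nat.even_iff, Nat.odd_iff] at hpar h
              omega
    have hstate' : ∀ n, n₀ < n →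
        (Odd (Nat.count p n) → GNJAux.TT M u v n = 1) ∧
        (Even (Nat.count p n) → GNJAux.TT M u v n = -1) := by
      intro n hn
      have h := hstate (n - (n₀+1))
      rwa [show n₀+1+(n-(n₀+1)) = n by omega] at h
    have hcount_nth : ∀ k : ℕ, (k:ℕ∞) < L → Nat.count p (m k) = k :=
      fun k h => Nat.count_nth (hcard_of k h)
    have hpm : ∀ k : ℕ, (k:ℕ∞) < L → p (m k) := fun k h => Nat.nth_mem k (hcard_of k h)
    have hflipval : ∀ k : ℕ, 0 < k → (k:ℕ∞) < L →
        (Odd k → u (m k) = M + 1 ∧ v (m k) = 0) ∧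
        (Even k → u (m k) = 0 ∧ v (m k) = M + 1) := by
      intro k hk hkL
      have hgt : n₀ < m k := by
        rw [← hm0]
        exact hmono 0 k hk hkL
      have hcn : Nat.count p (m k) = k := hcount_nth k hkL
      have hpmk := hpm k hkL
      have hsum : u (m k) + v (m k) = M + 1 := by
        rcases hpmk with h | ⟨_, h⟩
        · omega
        · exact h
      have hst := hstate' (m k) hgt
      constructor
      · intro hodd
        have hT : GNJAux.TT M u v (m k) = 1 := hst.1 (by rwa [hcn])
        rcases GNJAux.step_pos hM4 hdu hdv hT with ⟨h1, h2, _⟩ | ⟨h1, h2, _⟩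
        · exact ⟨h1, h2⟩
        · exfalso
          have := (hdv (m k)).2.1
          omega
      · intro heven
        have hT : GNJAux.TT M u v (m k) = -1 := hst.2 (by rwa [hcn])
        rcases GNJAux.step_neg hM4 hdu hdv hT with ⟨h1, h2, _⟩ | ⟨h1, h2, _⟩
        · exact ⟨h1, h2⟩
        · exfalso
          have := (hdu (m k)).2.1
          omega
    have hinterval : ∀ q q' i : ℕ, q' = q + 1 → (q:ℕ∞) < L → m q < i →
        (((q':ℕ):ℕ∞) < L → i < m q') → Nat.count p i = q + 1 ∧ ¬ p i := by
      intro q q' i hq' hqL hqi hub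
      subst hq'
      have h1 : q + 1 ≤ Nat.count p i := by
        have hcs := Nat.count_nth_succ (hcard_of q hqL)
        rw [← hmdef] at hcs
        calc q + 1 = Nat.count p (m q + 1) := hcs.symm
          _ ≤ Nat.count p i := Nat.count_monotone p (by omega)
      have h2 : Nat.count p i ≤ q + 1 := by
        by_contra hcon
        push_neg at hcon
        have hnth : Nat.nth p (q+1) < i := Nat.nth_lt_of_lt_count hcon
        rw [← hmdef] at hnth
        have hlt : ((q+1:ℕ):ℕ∞) < L := by
          rw [hbridge]
          intro hf
          exact lt_of_lt_of_le hcon (Nat.count_le_card hf i)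
        have := hub hlt
        omega
      have hcnt : Nat.count p i = q + 1 := by omega
      refine ⟨hcnt, fun hpi => ?_⟩
      have hni : Nat.nth p (q+1) = i := by
        rw [← hcnt]
        exact Nat.nth_count hpi
      rw [← hmdef] at hni
      have hlt : ((q+1:ℕ):ℕ∞) < L := by
        rw [hbridge]
        intro hf
        have h3 : Nat.count p (i+1) = q + 2 := by
          rw [Nat.count_succ, hcnt, if_pos hpi]
        have h4 : Nat.count p (i+1) ≤ hf.toFinset.card := by
          convert Nat.count_le_card hf (i+1)
          exact Finset.ext fun x => (Set.Finite.mem_toFinset _).trans (Set.Finite.mem_toFinset _).symm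
        omega
      have := hub hlt
      omega
    refine ⟨u, v, huv, L, m, hLpos, ?_, ?_, ?_, ?_, ?_, ?_, ?_⟩
    · intro k hk
      exact hmono k (k+1) (by omega) hk
    · intro i hi
      rw [hm0] at hi
      exact hmin' i hi
    · refine ⟨u n₀ - 2, by omega, by rw [hm0]; omega, by rw [hm0]; omega⟩
    · intro k hodd hkL
      exact (hflipval k (by rcases hodd with ⟨t, ht⟩; omega) hkL).1 hodd
    · intro k heven hk hkL
      exact (hflipval k hk hkL).2 heven
    · intro k i h1 h2 h3
      obtain ⟨hcnt, hnp⟩ := hinterval (2*k) (2*k+1) i rfl h1 h2 h3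
      have hgt : n₀ < i := by
        rcases Nat.eq_zero_or_pos (2*k) with h | h
        · rw [h] at h2
          rw [hm0] at h2
          omega
        · have := hmono 0 (2*k) h h1
          rw [hm0] at this
          omega
      have hT : GNJAux.TT M u v i = 1 :=
        (hstate' i hgt).1 (by rw [hcnt]; exact odd_two_mul_add_one k)
      rcases GNJAux.step_pos hM4 hdu hdv hT with ⟨ha1, ha2, _⟩ | ⟨ha1, ha2, _⟩
      · exact absurd (Or.inr ⟨hgt, by omega⟩) hnp
      · refine ⟨?_, ha2⟩
        rcases ha1 with h | h <;> simp [h]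
    · intro k i h1 h2 h3
      obtain ⟨hcnt, hnp⟩ := hinterval (2*k+1) (2*k+2) i (by omega) h1 h2 h3
      have hgt : n₀ < i := by
        have := hmono 0 (2*k+1) (by omega) h1
        rw [hm0] at this
        omega
      have hT : GNJAux.TT M u v i = -1 :=
        (hstate' i hgt).2 (by rw [hcnt]; exact ⟨k+1, by ring⟩)
      rcases GNJAux.step_neg hM4 hdu hdv hT with ⟨ha1, ha2, _⟩ | ⟨ha1, ha2, _⟩
      · exact absurd (Or.inr ⟨hgt, by omega⟩) hnp
      · have hu02 : u i = 0 ∨ u i = 2 := by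
          rcases ha1 with h | h <;> omega
        refine ⟨?_, ha2⟩
        rcases hu02 with h | h <;> simp [h]
  · -- uniqueness
    intro d hd hdx
    have hdd : GNJAux.DigSeq M d := fun n => hdig _ (hd n)
    by_cases hda' : d = a
    · exact Or.inl hda'
    · right
      have h0d : GNJAux.TT M a d 0 = 0 := GNJAux.tt_zero hM4 hda hdd (by rw [← hax, ← hdx])
      exact (GNJAux.partner_unique hM4 hda hdb hdd hx0 h0d hab
        (fun h => hda' h.symm)).symm
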